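/- Let X be a metric space, Y a topological space, Z a metric space covered by closed sets (Z_n)_{n∈ℕ} such that every convergent sequence in Z has all its terms in some single Z_n (property (*)). Let f : X × Y → Z be such that f(·,y) is continuous for each y ∈ Y, and f(x,·) is continuous for each x in a dense set D ⊆ X. Then there exists a sequence (B_n) of closed (in fact zero) subsets of X × Y with ⋃_n B_n = X × Y and f(B_n) ⊆ Z_n for every n. -/

import Mathlib

open Filter Set

/-- If `X`, `Z` are metric spaces, `Y` a topological space, `(Z n)` a closed cover of
`Z` with property `(*)`, and `f : X × Y → Z` is continuous in the first variable and
continuous in the second variable for `x` in a dense set `D`, then `X × Y` is covered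
by countably many closed (in fact zero) sets `B n` with `f '' (B n) ⊆ Z n`. -/
theorem vnsc_zero_set_decomposition {X Y Z : Type*} [MetricSpace X]
    [TopologicalSpace Y] [MetricSpace Z] (Zn : ℕ → Set Z)
    (hZclosed : ∀ n, IsClosed (Zn n)) (hZcover : ⋃ n, Zn n = univ)
    (hstar : ∀ (z : ℕ → Z) (l : Z), Tendsto z atTop (nhds l) → ∃ n, ∀ k, z k ∈ Zn n)
    (f : X × Y → Z) (hy : ∀ y : Y, Continuous fun x => f (x, y))
    (D : Set X) (hD : Dense D) (hx : ∀ x ∈ D, Continuous fun y => f (x, y)) :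
    ∃ B : ℕ → Set (X × Y), (∀ n, IsClosed (B n)) ∧
      (∀ n, ∃ g : X × Y → ℝ, Continuous g ∧ B n = g ⁻¹' {0}) ∧
      (⋃ n, B n = univ) ∧ ∀ n, f '' B n ⊆ Zn n := by
  classical
  -- the covers of `X` by balls of radius `(1/2)^k` centered in `D`
  have hcov : ∀ k : ℕ, ⋃ d : D, Metric.ball (d : X) ((1 / 2 : ℝ) ^ k) = univ := by
    intro k
    apply eq_univ_of_forall
    intro x
    rcases Metric.dense_iff.mp hD x ((1 / 2) ^ k) (by positivity) with ⟨d, hd1, hd2⟩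
    exact mem_iUnion.mpr ⟨⟨d, hd2⟩, by
      simpa [Metric.mem_ball, dist_comm] using hd1⟩
  -- locally finite precise refinements
  have href : ∀ k : ℕ, ∃ v : D → Set X, (∀ d, IsOpen (v d)) ∧ (⋃ d, v d = univ) ∧
      LocallyFinite v ∧ ∀ d, v d ⊆ Metric.ball (d : X) ((1 / 2 : ℝ) ^ k) :=
    fun k => precise_refinement _ (fun _ => Metric.isOpen_ball) (hcov k)
  choose V hVopen hVcov hVlf hVsub using href
  -- auxiliary functions
  set φ : ℕ → D → X → ℝ :=
    fun k d x => if (V k d)ᶜ = ∅ then 1 else Metric.infDist x (V k d)ᶜ with hφdef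
  set ψ : ℕ → D → Y → ℝ :=
    fun n d y => if Zn n = ∅ then 1 else Metric.infDist (f (d, y)) (Zn n) with hψdef
  set H : ℕ → ℕ → X × Y → ℝ := fun n k p => ∑ᶠ d : D, φ k d p.1 * ψ n d p.2 with hHdef
  set g : ℕ → X × Y → ℝ := fun n p => ∑' k : ℕ, min (H n k p) ((1 / 2 : ℝ) ^ k) with hgdef
  have hφnonneg : ∀ k d x, 0 ≤ φ k d x := by
    intro k d x; simp only [hφdef]; split_ifs
    · norm_num
    · exact Metric.infDist_nonneg
  have hψnonneg : ∀ n d y, 0 ≤ ψ n d y := by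
    intro n d y; simp only [hψdef]; split_ifs
    · norm_num
    · exact Metric.infDist_nonneg
  have hφcont : ∀ k d, Continuous (φ k d) := by
    intro k d; simp only [hφdef]; split_ifs
    · exact continuous_const
    · exact Metric.continuous_infDist_pt _
  have hψcont : ∀ n d, Continuous (ψ n d) := by
    intro n d; simp only [hψdef]; split_ifs
    · exact continuous_const
    · exact (Metric.continuous_infDist_pt _).comp (hx d.1 d.2)
  have hφmem : ∀ k d x, φ k d x ≠ 0 → x ∈ V k d := by
    intro k d x h
    simp only [hφdef] at h
    split_ifs at h with hc
    · have : V k d = univ := by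
        rw [← compl_compl (V k d), hc, compl_empty]
      simp [this]
    · by_contra hx'
      exact h (Metric.infDist_zero_of_mem (by simpa using hx'))
  have hφpos : ∀ k d x, x ∈ V k d → 0 < φ k d x := by
    intro k d x hxV
    simp only [hφdef]; split_ifs with hc
    · norm_num
    · have hcl : IsClosed (V k d)ᶜ := (hVopen k d).isClosed_compl
      have hne : ((V k d)ᶜ).Nonempty := nonempty_iff_ne_empty.mpr hc
      have hxn : x ∉ (V k d)ᶜ := by simpa using hxV
      rcases lt_or_eq_of_le (Metric.infDist_nonneg (x := x) (s := (V k d)ᶜ)) with h | h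
      · exact h
      · exact absurd ((hcl.mem_iff_infDist_zero hne).mpr h.symm) hxn
  have hψzero : ∀ n d y, ψ n d y = 0 ↔ f (↑d, y) ∈ Zn n := by
    intro n d y
    simp only [hψdef]; split_ifs with hc
    · simp [hc]
    · rw [← (hZclosed n).mem_iff_infDist_zero (nonempty_iff_ne_empty.mpr hc)]
  -- local finiteness of supports
  have hlf : ∀ n k, LocallyFinite
      (fun d : D => Function.support fun p : X × Y => φ k d p.1 * ψ n d p.2) := by
    intro n k
    intro p
    obtain ⟨U, hU, hfin⟩ := (hVlf k).closure p.1
    refine ⟨U ×ˢ (univ : Set Y), prod_mem_nhds hU univ_mem, ?_⟩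
    apply hfin.subset
    rintro d ⟨q, hq1, hq2⟩
    have hφne : φ k d q.1 ≠ 0 := left_ne_zero_of_mul hq1
    exact ⟨q.1, subset_closure (hφmem k d q.1 hφne), hq2.1⟩
  have hHcont : ∀ n k, Continuous (H n k) := by
    intro n k
    simp only [hHdef]
    exact continuous_finsum
      (fun d => ((hφcont k d).comp continuous_fst).mul ((hψcont n d).comp continuous_snd))
      (hlf n k)
  have hptfin : ∀ n k (p : X × Y),
      (Function.support fun d : D => φ k d p.1 * ψ n d p.2).Finite := by
    intro n k p
    exact (hlf n k).point_finite p
  have hHnonneg : ∀ n k p, 0 ≤ H n k p := by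
    intro n k p
    simp only [hHdef]
    exact finsum_nonneg fun d => mul_nonneg (hφnonneg k d p.1) (hψnonneg n d p.2)
  have hH0iff : ∀ n k p, H n k p = 0 ↔ ∀ d : D, φ k d p.1 * ψ n d p.2 = 0 := by
    intro n k p
    constructor
    · intro h0 d
      have hle : φ k d p.1 * ψ n d p.2 ≤ H n k p :=
        single_le_finsum d (hptfin n k p)
          (fun d' => mul_nonneg (hφnonneg k d' p.1) (hψnonneg n d' p.2))
      exact le_antisymm (h0 ▸ hle) (mul_nonneg (hφnonneg k d p.1) (hψnonneg n d p.2))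
    · intro h
      simp only [hHdef]
      calc (∑ᶠ d : D, φ k d p.1 * ψ n d p.2) = ∑ᶠ _ : D, (0 : ℝ) := finsum_congr h
        _ = 0 := finsum_zero
  have hsumgeo : Summable fun k : ℕ => (1 / 2 : ℝ) ^ k :=
    summable_geometric_of_lt_one (by norm_num) (by norm_num)
  have hsummable : ∀ n p, Summable fun k => min (H n k p) ((1 / 2 : ℝ) ^ k) := by
    intro n p
    exact Summable.of_nonneg_of_le
      (fun k => le_min (hHnonneg n k p) (by positivity))
      (fun k => min_le_right _ _) hsumgeo
  have hgzero : ∀ n p, g n p = 0 ↔ ∀ k, H n k p = 0 := by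
    intro n p
    constructor
    · intro h0 k
      have h1 : min (H n k p) ((1 / 2 : ℝ) ^ k) ≤ 0 := by
        have := Summable.le_tsum (hsummable n p) k
          (fun j _ => le_min (hHnonneg n j p) (by positivity))
        simp only [hgdef] at h0
        linarith
      have h2 : (0 : ℝ) ≤ min (H n k p) ((1 / 2 : ℝ) ^ k) :=
        le_min (hHnonneg n k p) (by positivity)
      have hmin : min (H n k p) ((1 / 2 : ℝ) ^ k) = 0 := le_antisymm h1 h2
      rcases le_or_gt (H n k p) ((1 / 2 : ℝ) ^ k) with hc | hc
      · rwa [min_eq_left hc] at hmin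
      · rw [min_eq_right hc.le] at hmin
        exact absurd hmin (by positivity : (0:ℝ) < (1/2:ℝ)^k).ne'
    · intro h
      simp only [hgdef]
      have heq : (fun k => min (H n k p) ((1 / 2 : ℝ) ^ k)) = fun _ => (0 : ℝ) := by
        funext k
        rw [h k]
        exact min_eq_left (by positivity)
      rw [heq, tsum_zero]
  have hgcont : ∀ n, Continuous (g n) := by
    intro n
    simp only [hgdef]
    apply continuous_tsum (fun k => (hHcont n k).min continuous_const) hsumgeo
    intro k p
    rw [Real.norm_eq_abs, abs_of_nonneg (le_min (hHnonneg n k p) (by positivity))]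
    exact min_le_right _ _
  refine ⟨fun n => g n ⁻¹' {0}, ?_, ?_, ?_, ?_⟩
  · exact fun n => IsClosed.preimage (hgcont n) isClosed_singleton
  · exact fun n => ⟨g n, hgcont n, rfl⟩
  · -- coverage
    apply eq_univ_of_forall
    rintro ⟨x, y⟩
    have hfin : ∀ k, {d : D | x ∈ V k d}.Finite := fun k => (hVlf k).point_finite x
    set M : ℕ → List Z := fun k => ((hfin k).toFinset.toList).map (fun d : ↥D => f (↑d, y)) with hM
    set l : Z := f (x, y) with hl
    set z : ℕ → Z := fun j => (M (Nat.unpair j).1).getD (Nat.unpair j).2 l with hz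
    have hMmem : ∀ k v, v ∈ M k → ∃ d : D, x ∈ V k d ∧ v = f (↑d, y) := by
      intro k v hv
      rw [hM] at hv
      obtain ⟨d, hd, hdv⟩ := List.mem_map.mp hv
      rw [Finset.mem_toList, Set.Finite.mem_toFinset] at hd
      exact ⟨d, hd, hdv.symm⟩
    have hzval : ∀ k (d : D), x ∈ V k d → ∃ j, z j = f (↑d, y) := by
      intro k d hxV
      have hdmem : d ∈ (hfin k).toFinset.toList := by
        rw [Finset.mem_toList, Set.Finite.mem_toFinset]
        exact hxV
      have hvmem : f (↑d, y) ∈ M k := by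
        rw [hM]
        exact List.mem_map_of_mem hdmem
      obtain ⟨i, hi, hig⟩ := List.mem_iff_getElem.mp hvmem
      refine ⟨Nat.pair k i, ?_⟩
      simp only [hz, Nat.unpair_pair]
      rw [List.getD_eq_getElem _ _ hi]
      exact hig
    have hz_tendsto : Tendsto z atTop (nhds l) := by
      rw [← Nat.cofinite_eq_atTop, Metric.tendsto_nhds]
      intro ε hε
      rw [Filter.eventually_cofinite]
      obtain ⟨δ, hδpos, hδ⟩ := Metric.continuousAt_iff.mp ((hy y).continuousAt (x := x)) ε hε
      obtain ⟨K, hK⟩ := exists_pow_lt_of_lt_one hδpos (by norm_num : (1 / 2 : ℝ) < 1)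
      set Bd : ℕ := (Finset.range K).sup fun k => (M k).length with hBd
      have hSfin : (Set.Iio K ×ˢ Set.Iio Bd).Finite :=
        (Set.finite_Iio K).prod (Set.finite_Iio Bd)
      have hinj : Function.Injective Nat.unpair := by
        intro a b h
        rw [← Nat.pair_unpair a, h, Nat.pair_unpair]
      apply Set.Finite.subset ((hSfin).preimage hinj.injOn)
      intro j hj
      simp only [Set.mem_setOf_eq, not_lt] at hj
      set k := (Nat.unpair j).1 with hk
      set i := (Nat.unpair j).2 with hi
      -- first: i must be within the list, else `z j = l` and `dist l l = 0 < ε`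
      have hilen : i < (M k).length := by
        by_contra hge
        push_neg at hge
        have : z j = l := by
          simp only [hz, ← hk, ← hi]
          exact List.getD_eq_default _ _ hge
        rw [this] at hj
        simp only [dist_self] at hj
        linarith
      -- the value of z j
      have hzmem : z j ∈ M k := by
        have : z j = (M k)[i]'hilen := by
          simp only [hz, ← hk, ← hi]
          exact List.getD_eq_getElem _ _ hilen
        rw [this]
        exact List.getElem_mem _
      obtain ⟨d, hdV, hval⟩ := hMmem k (z j) hzmem
      -- k must be < K
      have hkK : k < K := by
        by_contra hge
        push_neg at hge
        have hball : x ∈ Metric.ball (↑d : X) ((1 / 2 : ℝ) ^ k) := hVsub k d hdV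
        have hdist : dist (↑d : X) x < δ := by
          rw [dist_comm]
          calc dist x (↑d : X) < (1 / 2 : ℝ) ^ k := by simpa [Metric.mem_ball] using hball
            _ ≤ (1 / 2 : ℝ) ^ K := pow_le_pow_of_le_one (by norm_num) (by norm_num) hge
            _ < δ := hK
        have : dist (f (↑d, y)) l < ε := by
          simpa [hl] using hδ hdist
        rw [hval] at hj
        exact absurd this (not_lt.mpr hj)
      refine ⟨hkK, lt_of_lt_of_le hilen ?_⟩
      exact Finset.le_sup (f := fun k => (M k).length) (Finset.mem_range.mpr hkK)
    obtain ⟨n, hn⟩ := hstar z l hz_tendsto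
    refine mem_iUnion.mpr ⟨n, ?_⟩
    simp only [Set.mem_preimage, Set.mem_singleton_iff]
    rw [hgzero n (x, y)]
    intro k
    rw [hH0iff]
    intro d
    by_cases hφ0 : φ k d (x, y).1 = 0
    · rw [hφ0, zero_mul]
    · have hxV : x ∈ V k d := hφmem k d x hφ0
      obtain ⟨j, hj⟩ := hzval k d hxV
      have hfd : f (↑d, y) ∈ Zn n := hj ▸ hn j
      have hψ0 : ψ n d y = 0 := (hψzero n d y).mpr hfd
      show φ k d x * ψ n d y = 0
      rw [hψ0, mul_zero]
  · -- images
    intro n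
    rintro _ ⟨⟨x, y⟩, hp, rfl⟩
    have h0 : ∀ k, H n k (x, y) = 0 := by
      rw [← hgzero n (x, y)]
      simpa using hp
    have hdk : ∀ k : ℕ, ∃ d : D, x ∈ V k d := by
      intro k
      have := hVcov k
      rw [eq_univ_iff_forall] at this
      exact mem_iUnion.mp (this x)
    choose dk hdkmem using hdk
    have hmemZ : ∀ k, f (↑(dk k), y) ∈ Zn n := by
      intro k
      have hterm : φ k (dk k) x * ψ n (dk k) y = 0 := (hH0iff n k (x, y)).mp (h0 k) (dk k)
      have hφpos' := hφpos k (dk k) x (hdkmem k)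
      have hψ0 : ψ n (dk k) y = 0 := by
        rcases mul_eq_zero.mp hterm with h | h
        · exact absurd h hφpos'.ne'
        · exact h
      exact (hψzero _ _ _).mp hψ0
    have hconv : Tendsto (fun k => f (↑(dk k), y)) atTop (nhds (f (x, y))) := by
      have hdist : Tendsto (fun k => (↑(dk k) : X)) atTop (nhds x) := by
        rw [Metric.tendsto_atTop]
        intro ε hε
        obtain ⟨K, hK⟩ := exists_pow_lt_of_lt_one hε (by norm_num : (1 / 2 : ℝ) < 1)
        refine ⟨K, fun k hk => ?_⟩
        have h1 : x ∈ Metric.ball (↑(dk k) : X) ((1 / 2 : ℝ) ^ k) := hVsub k (dk k) (hdkmem k)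
        calc dist (↑(dk k) : X) x < (1 / 2 : ℝ) ^ k := by
              rw [dist_comm]; simpa [Metric.mem_ball] using h1
          _ ≤ (1 / 2 : ℝ) ^ K := pow_le_pow_of_le_one (by norm_num) (by norm_num) hk
          _ < ε := hK
      exact ((hy y).tendsto x).comp hdist
    exact (hZclosed n).mem_of_tendsto hconv (Filter.Eventually.of_forall hmemZ)
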